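/- Let H be a finite-dimensional Hopf algebra and Λ ∈ H a left integral (i.e. hΛ = ε(h)Λ for all h ∈ H). Then every element of the form ad Λ (h) = Σ Λ₁ h S(Λ₂) is central in H; moreover the subspace ad Λ (H) is an ideal of the center Z(H). -/

import Mathlib

open TensorProduct

namespace HopfAux

open Coalgebra

variable {k H : Type*} [CommSemiring k] [Semiring H] [HopfAlgebra k H]

local notation "S'" => HopfAlgebra.antipode (R := k)

/-- Lift a trilinear map to `H ⊗ (H ⊗ H)`. -/
noncomputable def lift3 (φ : H →ₗ[k] H →ₗ[k] H →ₗ[k] H) : H ⊗[k] (H ⊗[k] H) →ₗ[k] H :=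
  TensorProduct.lift ((TensorProduct.lift.equiv (RingHom.id k) H H H).toLinearMap ∘ₗ φ)

@[simp] lemma lift3_tmul (φ : H →ₗ[k] H →ₗ[k] H →ₗ[k] H) (x y z : H) :
    lift3 (k := k) φ (x ⊗ₜ (y ⊗ₜ z)) = φ x y z := rfl

/-- `(x, y, z) ↦ (S c * (S x * (y * d))) * S (z * e)`. -/
noncomputable def φA (c d e : H) : H →ₗ[k] H →ₗ[k] H →ₗ[k] H :=
  ((((LinearMap.mul k H).compl₂ (LinearMap.mulRight k d)) ∘ₗ S').compr₂
      (LinearMap.mulLeft k (S' c))).compr₂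
    ((LinearMap.mul k H).compl₂ (S' ∘ₗ LinearMap.mulRight k e))

@[simp] lemma φA_apply (c d e x y z : H) :
    φA (k := k) c d e x y z = (S' c * (S' x * (y * d))) * S' (z * e) := rfl

/-- `(x, y, z) ↦ (S x * (S c * (d * y))) * S (e * z)`. -/
noncomputable def φB (c d e : H) : H →ₗ[k] H →ₗ[k] H →ₗ[k] H :=
  (((LinearMap.mul k H) ∘ₗ S').compl₂
      (LinearMap.mulLeft k (S' c) ∘ₗ LinearMap.mulLeft k d)).compr₂
    ((LinearMap.mul k H).compl₂ (S' ∘ₗ LinearMap.mulLeft k e))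

@[simp] lemma φB_apply (c d e x y z : H) :
    φB (k := k) c d e x y z = (S' x * (S' c * (d * y))) * S' (e * z) := rfl

/-- `(u, v, w) ↦ u * (A * (S v * w))`. -/
noncomputable def φC (A : H) : H →ₗ[k] H →ₗ[k] H →ₗ[k] H :=
  ((LinearMap.llcomp k H H H) ∘ₗ (LinearMap.mul k H)).compl₂
    (((LinearMap.mul k H) ∘ₗ S').compr₂ (LinearMap.mulLeft k A))

@[simp] lemma φC_apply (A u v w : H) :
    φC (k := k) A u v w = u * (A * (S' v * w)) := rfl

/-- `(u, v) ↦ (c₁ * (c₂ * u)) * S v`. -/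
noncomputable def μmap (c₁ c₂ : H) : H →ₗ[k] H →ₗ[k] H :=
  ((LinearMap.mul k H).compl₂ S') ∘ₗ (LinearMap.mulLeft k c₁ ∘ₗ LinearMap.mulLeft k c₂)

@[simp] lemma μmap_apply (c₁ c₂ u v : H) :
    μmap (k := k) c₁ c₂ u v = (c₁ * (c₂ * u)) * S' v := rfl

lemma sum_counit_smul_right {a : H} (r : Coalgebra.Repr k a (H × H)) :
    ∑ i ∈ r.index, Coalgebra.counit (R := k) (r.left i) • r.right i = a := by
  have := congrArg (TensorProduct.lid k H) (Coalgebra.sum_counit_tmul_eq r)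
  simp only [map_sum, TensorProduct.lid_tmul, one_smul] at this
  exact this

lemma sum_counit_smul_left {a : H} (r : Coalgebra.Repr k a (H × H)) :
    ∑ i ∈ r.index, Coalgebra.counit (R := k) (r.right i) • r.left i = a := by
  have := congrArg (TensorProduct.rid k H) (Coalgebra.sum_tmul_counit_eq r)
  simp only [map_sum, TensorProduct.rid_tmul, one_smul] at this
  exact this

lemma mu_comul (c₁ c₂ c : H) :
    TensorProduct.lift (μmap (k := k) c₁ c₂) (Coalgebra.comul (R := k) c)
      = Coalgebra.counit (R := k) c • (c₁ * c₂) := by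
  have h1 : ∀ w : H ⊗[k] H, TensorProduct.lift (μmap (k := k) c₁ c₂) w
      = c₁ * (c₂ * (LinearMap.mul' k H (LinearMap.lTensor H S' w))) := by
    intro w
    induction w using TensorProduct.induction_on with
    | zero => simp
    | tmul u v => simp [mul_assoc]
    | add u v hu hv => simp [map_add, mul_add, hu, hv]
  rw [h1, HopfAlgebra.mul_antipode_lTensor_comul_apply, Algebra.algebraMap_eq_smul_one,
    mul_smul_comm, mul_smul_comm, mul_one]


lemma collapse_left {c : H} (r : Coalgebra.Repr k c (H × H)) (v : H →ₗ[k] H) :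
    ∑ i ∈ r.index, Coalgebra.counit (R := k) (r.right i) • v (r.left i) = v c := by
  have h := congrArg v (sum_counit_smul_left (k := k) r)
  rw [map_sum] at h
  simp only [map_smul] at h
  exact h

lemma collapse_right {c : H} (r : Coalgebra.Repr k c (H × H)) (v : H →ₗ[k] H) :
    ∑ i ∈ r.index, Coalgebra.counit (R := k) (r.left i) • v (r.right i) = v c := by
  have h := congrArg v (sum_counit_smul_right (k := k) r)
  rw [map_sum] at h
  simp only [map_smul] at h
  exact h

lemma antipode_collapse {c : H} (r : Coalgebra.Repr k c (H × H)) (u w : H) :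
    ∑ l ∈ r.index, u * (S' (r.left l) * (r.right l * w))
      = Coalgebra.counit (R := k) c • (u * w) := by
  calc ∑ l ∈ r.index, u * (S' (r.left l) * (r.right l * w))
      = u * ((∑ l ∈ r.index, S' (r.left l) * r.right l) * w) := by
        rw [Finset.sum_mul, Finset.mul_sum]
        exact Finset.sum_congr rfl fun l _ => by rw [mul_assoc]
    _ = Coalgebra.counit (R := k) c • (u * w) := by
        rw [HopfAlgebra.sum_antipode_mul_eq_smul r, smul_mul_assoc, one_mul, mul_smul_comm]

lemma antipode_collapse' {c : H} (r : Coalgebra.Repr k c (H × H)) (w : H) :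
    ∑ l ∈ r.index, S' (r.left l) * (r.right l * w)
      = Coalgebra.counit (R := k) c • w := by
  have h := antipode_collapse (k := k) r 1 w
  simp only [one_mul] at h
  exact h

lemma sum4_comm {M : Type*} [AddCommMonoid M] {α : Type*} {β : α → Type*} {γ : Type*}
    {δ : γ → Type*}
    (sa : Finset α) (sb : ∀ p, Finset (β p)) (sc : Finset γ) (sd : ∀ i, Finset (δ i))
    (f : ∀ p, β p → ∀ i, δ i → M) :
    ∑ p ∈ sa, ∑ m ∈ sb p, ∑ i ∈ sc, ∑ l ∈ sd i, f p m i l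
      = ∑ i ∈ sc, ∑ l ∈ sd i, ∑ p ∈ sa, ∑ m ∈ sb p, f p m i l := by
  trans ∑ p ∈ sa, ∑ i ∈ sc, ∑ m ∈ sb p, ∑ l ∈ sd i, f p m i l
  · exact Finset.sum_congr rfl fun p _ => Finset.sum_comm
  trans ∑ i ∈ sc, ∑ p ∈ sa, ∑ m ∈ sb p, ∑ l ∈ sd i, f p m i l
  · exact Finset.sum_comm
  refine Finset.sum_congr rfl fun i _ => ?_
  trans ∑ p ∈ sa, ∑ l ∈ sd i, ∑ m ∈ sb p, f p m i l
  · exact Finset.sum_congr rfl fun p _ => Finset.sum_comm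
  · exact Finset.sum_comm

theorem antipode_mul (a b : H) : S' (a * b) = S' b * S' a := by
  have ra := ℛ k a
  have rb := ℛ k b
  have ra1 : ∀ i : ra.ι, Coalgebra.Repr k (ra.left i) (H × H) := fun i => ℛ k (ra.left i)
  have ra2 : ∀ i : ra.ι, Coalgebra.Repr k (ra.right i) (H × H) := fun i => ℛ k (ra.right i)
  have rb1 : ∀ p : rb.ι, Coalgebra.Repr k (rb.left p) (H × H) := fun p => ℛ k (rb.left p)
  have rb2 : ∀ p : rb.ι, Coalgebra.Repr k (rb.right p) (H × H) := fun p => ℛ k (rb.right p)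
  -- claim2 : E₂ = S (a * b)
  have claim2 :
      (∑ p ∈ rb.index, ∑ m ∈ (rb1 p).index, ∑ i ∈ ra.index, ∑ l ∈ (ra1 i).index,
        (S' ((rb1 p).left m) * (S' ((ra1 i).left l) * ((ra1 i).right l * (rb1 p).right m))) *
          S' (ra.right i * rb.right p)) = S' (a * b) := by
    refine Eq.trans (Finset.sum_congr rfl fun p _ => ?_) (collapse_right (k := k) rb
      (S' ∘ₗ LinearMap.mulLeft k a))
    refine Eq.trans (Finset.sum_congr rfl fun m _ => ?_) (antipode_collapse' (k := k) (rb1 p)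
      (S' (a * rb.right p)))
    trans ∑ i ∈ ra.index, Coalgebra.counit (R := k) (ra.left i) •
        (S' ((rb1 p).left m) * ((rb1 p).right m * S' (ra.right i * rb.right p)))
    · refine Finset.sum_congr rfl fun i _ => ?_
      calc ∑ l ∈ (ra1 i).index,
          (S' ((rb1 p).left m) * (S' ((ra1 i).left l) * ((ra1 i).right l * (rb1 p).right m))) *
            S' (ra.right i * rb.right p)
          = ∑ l ∈ (ra1 i).index, S' ((rb1 p).left m) * (S' ((ra1 i).left l) *
              ((ra1 i).right l * ((rb1 p).right m * S' (ra.right i * rb.right p)))) :=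
            Finset.sum_congr rfl fun l _ => by simp only [mul_assoc]
        _ = Coalgebra.counit (R := k) (ra.left i) •
              (S' ((rb1 p).left m) * ((rb1 p).right m * S' (ra.right i * rb.right p))) :=
            antipode_collapse (k := k) (ra1 i) _ _
    · exact collapse_right (k := k) ra
        (LinearMap.mulLeft k (S' ((rb1 p).left m)) ∘ₗ (LinearMap.mulLeft k ((rb1 p).right m) ∘ₗ
          (S' ∘ₗ LinearMap.mulRight k (rb.right p))))
  -- claim1 : E₁ = S b * S a
  have claim1 :
      (∑ p ∈ rb.index, ∑ m ∈ (rb2 p).index, ∑ i ∈ ra.index, ∑ l ∈ (ra2 i).index,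
        (S' (rb.left p) * (S' (ra.left i) * ((ra2 i).left l * (rb2 p).left m))) *
          S' ((ra2 i).right l * (rb2 p).right m)) = S' b * S' a := by
    have inner : ∀ (p : rb.ι) (i : ra.ι),
        (∑ l ∈ (ra2 i).index, ∑ m ∈ (rb2 p).index,
          (S' (rb.left p) * (S' (ra.left i) * ((ra2 i).left l * (rb2 p).left m))) *
            S' ((ra2 i).right l * (rb2 p).right m))
        = (Coalgebra.counit (R := k) (ra.right i) * Coalgebra.counit (R := k) (rb.right p)) •
            (S' (rb.left p) * S' (ra.left i)) := by
      intro p i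
      have hprod : (∑ l ∈ (ra2 i).index, ∑ m ∈ (rb2 p).index,
          ((ra2 i).left l * (rb2 p).left m) ⊗ₜ[k] ((ra2 i).right l * (rb2 p).right m))
          = Coalgebra.comul (R := k) (ra.right i * rb.right p) := by
        rw [Bialgebra.comul_mul, ← (ra2 i).eq, ← (rb2 p).eq, Finset.sum_mul_sum]
        simp only [Algebra.TensorProduct.tmul_mul_tmul]
      have h2 := congrArg
        (TensorProduct.lift (μmap (k := k) (S' (rb.left p)) (S' (ra.left i)))) hprod
      rw [mu_comul] at h2
      simp only [map_sum, TensorProduct.lift.tmul, μmap_apply, Bialgebra.counit_mul] at h2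
      exact h2
    trans ∑ p ∈ rb.index, ∑ i ∈ ra.index,
        (Coalgebra.counit (R := k) (ra.right i) * Coalgebra.counit (R := k) (rb.right p)) •
          (S' (rb.left p) * S' (ra.left i))
    · refine Finset.sum_congr rfl fun p _ => ?_
      trans ∑ i ∈ ra.index, ∑ l ∈ (ra2 i).index, ∑ m ∈ (rb2 p).index,
          (S' (rb.left p) * (S' (ra.left i) * ((ra2 i).left l * (rb2 p).left m))) *
            S' ((ra2 i).right l * (rb2 p).right m)
      · exact Finset.sum_comm.trans (Finset.sum_congr rfl fun i _ => Finset.sum_comm)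
      · exact Finset.sum_congr rfl fun i _ => inner p i
    · trans ∑ p ∈ rb.index,
          Coalgebra.counit (R := k) (rb.right p) • (S' (rb.left p) * S' a)
      · refine Finset.sum_congr rfl fun p _ => ?_
        have hcol := collapse_left (k := k) ra
          (Coalgebra.counit (R := k) (rb.right p) • (LinearMap.mulLeft k (S' (rb.left p)) ∘ₗ S'))
        simp only [LinearMap.smul_apply, LinearMap.coe_comp, Function.comp_apply,
          LinearMap.mulLeft_apply] at hcol
        calc ∑ i ∈ ra.index,
            (Coalgebra.counit (R := k) (ra.right i) * Coalgebra.counit (R := k) (rb.right p)) •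
              (S' (rb.left p) * S' (ra.left i))
            = ∑ i ∈ ra.index, Coalgebra.counit (R := k) (ra.right i) •
                (Coalgebra.counit (R := k) (rb.right p) • (S' (rb.left p) * S' (ra.left i))) :=
              Finset.sum_congr rfl fun i _ => mul_smul _ _ _
          _ = Coalgebra.counit (R := k) (rb.right p) • (S' (rb.left p) * S' a) := hcol
      · have hcol2 := collapse_left (k := k) rb (LinearMap.mulRight k (S' a) ∘ₗ S')
        simp only [LinearMap.coe_comp, Function.comp_apply, LinearMap.mulRight_apply] at hcol2
        exact hcol2
  have key_a := Coalgebra.sum_tmul_tmul_eq (R := k) ra ra1 ra2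
  have key_b := Coalgebra.sum_tmul_tmul_eq (R := k) rb rb1 rb2
  calc S' (a * b)
      = ∑ p ∈ rb.index, ∑ m ∈ (rb1 p).index, ∑ i ∈ ra.index, ∑ l ∈ (ra1 i).index,
          (S' ((rb1 p).left m) * (S' ((ra1 i).left l) * ((ra1 i).right l * (rb1 p).right m))) *
            S' (ra.right i * rb.right p) := claim2.symm
    _ = ∑ i ∈ ra.index, ∑ l ∈ (ra1 i).index, ∑ p ∈ rb.index, ∑ m ∈ (rb1 p).index,
          (S' ((rb1 p).left m) * (S' ((ra1 i).left l) * ((ra1 i).right l * (rb1 p).right m))) *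
            S' (ra.right i * rb.right p) :=
        sum4_comm rb.index (fun p => (rb1 p).index) ra.index (fun i => (ra1 i).index) _
    _ = ∑ i ∈ ra.index, ∑ l ∈ (ra1 i).index, ∑ p ∈ rb.index, ∑ m ∈ (rb2 p).index,
          (S' (rb.left p) * (S' ((ra1 i).left l) * ((ra1 i).right l * (rb2 p).left m))) *
            S' (ra.right i * (rb2 p).right m) := by
        refine Finset.sum_congr rfl fun i _ => Finset.sum_congr rfl fun l _ => ?_
        have h := congrArg (lift3 (φB (k := k) ((ra1 i).left l) ((ra1 i).right l) (ra.right i)))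
          key_b
        simp only [map_sum, lift3_tmul, φB_apply] at h
        exact h
    _ = ∑ p ∈ rb.index, ∑ m ∈ (rb2 p).index, ∑ i ∈ ra.index, ∑ l ∈ (ra1 i).index,
          (S' (rb.left p) * (S' ((ra1 i).left l) * ((ra1 i).right l * (rb2 p).left m))) *
            S' (ra.right i * (rb2 p).right m) :=
        (sum4_comm rb.index (fun p => (rb2 p).index) ra.index (fun i => (ra1 i).index) _).symm
    _ = ∑ p ∈ rb.index, ∑ m ∈ (rb2 p).index, ∑ i ∈ ra.index, ∑ l ∈ (ra2 i).index,
          (S' (rb.left p) * (S' (ra.left i) * ((ra2 i).left l * (rb2 p).left m))) *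
            S' ((ra2 i).right l * (rb2 p).right m) := by
        refine Finset.sum_congr rfl fun p _ => Finset.sum_congr rfl fun m _ => ?_
        have h := congrArg (lift3 (φA (k := k) (rb.left p) ((rb2 p).left m) ((rb2 p).right m)))
          key_a
        simp only [map_sum, lift3_tmul, φA_apply] at h
        exact h
    _ = S' b * S' a := claim1

end HopfAux

/-- The left Hopf-adjoint action `ad h a = Σ h₁ a S(h₂)`. -/
noncomputable def ad {k H : Type*} [Field k] [Ring H] [HopfAlgebra k H] (h a : H) : H :=
  TensorProduct.lift ((LinearMap.mul k H).compl₂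
      ((LinearMap.mulLeft k a).comp (HopfAlgebra.antipode (R := k))))
    (Coalgebra.comul (R := k) h)

section main

variable {k H : Type*} [Field k] [Ring H] [HopfAlgebra k H]

local notation "S'" => HopfAlgebra.antipode (R := k)

open Coalgebra HopfAux

lemma ad_eq (h x : H) (r : Coalgebra.Repr k h (H × H)) :
    ad (k := k) h x = ∑ i ∈ r.index, r.left i * (x * S' (r.right i)) := by
  rw [ad, ← r.eq, map_sum]
  rfl

theorem stmt_3' (Λ : H) (hΛ : ∀ h : H, h * Λ = Coalgebra.counit (R := k) h • Λ) :
    (∀ (x g : H), g * ad (k := k) Λ x = ad (k := k) Λ x * g) ∧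
    (∀ (z x : H), (∀ g : H, g * z = z * g) →
      ∃ y : H, z * ad (k := k) Λ x = ad (k := k) Λ y) := by
  constructor
  · intro x g
    have rΛ := ℛ k Λ
    have rg := ℛ k g
    have rg1 : ∀ j : rg.ι, Coalgebra.Repr k (rg.left j) (H × H) := fun j => ℛ k (rg.left j)
    have rg2 : ∀ j : rg.ι, Coalgebra.Repr k (rg.right j) (H × H) := fun j => ℛ k (rg.right j)
    have intA : ∀ h : H, Coalgebra.comul (R := k) h * Coalgebra.comul (R := k) Λ
        = Coalgebra.counit (R := k) h • Coalgebra.comul (R := k) Λ := fun h => by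
      rw [← Bialgebra.comul_mul, hΛ h, map_smul]
    set F : H →ₗ[k] H →ₗ[k] H :=
      (LinearMap.mul k H).compl₂
        ((LinearMap.mulLeft k x).comp (HopfAlgebra.antipode (R := k))) with hF
    set Ψ : (H ⊗[k] H) ⊗[k] H →ₗ[k] H :=
      TensorProduct.lift ((LinearMap.mul k H) ∘ₗ TensorProduct.lift F) with hΨ
    have hAF : ad (k := k) Λ x = TensorProduct.lift F (Coalgebra.comul (R := k) Λ) := rfl
    have hP : (∑ j ∈ rg.index,
          (Coalgebra.comul (R := k) (rg.left j) * Coalgebra.comul (R := k) Λ) ⊗ₜ[k] rg.right j)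
        = Coalgebra.comul (R := k) Λ ⊗ₜ[k] g := by
      calc ∑ j ∈ rg.index,
            (Coalgebra.comul (R := k) (rg.left j) * Coalgebra.comul (R := k) Λ) ⊗ₜ[k] rg.right j
          = ∑ j ∈ rg.index, Coalgebra.comul (R := k) Λ ⊗ₜ[k]
              (Coalgebra.counit (R := k) (rg.left j) • rg.right j) := by
            refine Finset.sum_congr rfl fun j _ => ?_
            rw [intA (rg.left j), TensorProduct.smul_tmul]
        _ = Coalgebra.comul (R := k) Λ ⊗ₜ[k]
              (∑ j ∈ rg.index, Coalgebra.counit (R := k) (rg.left j) • rg.right j) :=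
            (TensorProduct.tmul_sum _ _ _).symm
        _ = Coalgebra.comul (R := k) Λ ⊗ₜ[k] g := by rw [sum_counit_smul_right rg]
    have e2 : Ψ (∑ j ∈ rg.index,
          (Coalgebra.comul (R := k) (rg.left j) * Coalgebra.comul (R := k) Λ) ⊗ₜ[k] rg.right j)
        = ad (k := k) Λ x * g := by
      rw [hP, hAF, hΨ]
      simp only [TensorProduct.lift.tmul, LinearMap.coe_comp, Function.comp_apply,
        LinearMap.mul_apply']
    have hprodj : ∀ j : rg.ι, Coalgebra.comul (R := k) (rg.left j) * Coalgebra.comul (R := k) Λ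
        = ∑ l ∈ (rg1 j).index, ∑ i ∈ rΛ.index,
            ((rg1 j).left l * rΛ.left i) ⊗ₜ[k] ((rg1 j).right l * rΛ.right i) := fun j => by
      rw [← (rg1 j).eq, ← rΛ.eq, Finset.sum_mul_sum]
      simp only [Algebra.TensorProduct.tmul_mul_tmul]
    have e3 : Ψ (∑ j ∈ rg.index,
          (Coalgebra.comul (R := k) (rg.left j) * Coalgebra.comul (R := k) Λ) ⊗ₜ[k] rg.right j)
        = ∑ j ∈ rg.index, ∑ l ∈ (rg1 j).index,
            (rg1 j).left l * (ad (k := k) Λ x * (S' ((rg1 j).right l) * rg.right j)) := by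
      calc Ψ (∑ j ∈ rg.index,
            (Coalgebra.comul (R := k) (rg.left j) * Coalgebra.comul (R := k) Λ) ⊗ₜ[k] rg.right j)
          = ∑ j ∈ rg.index, ∑ l ∈ (rg1 j).index, ∑ i ∈ rΛ.index,
              (((rg1 j).left l * rΛ.left i) *
                (x * S' ((rg1 j).right l * rΛ.right i))) * rg.right j := by
            rw [map_sum]
            refine Finset.sum_congr rfl fun j _ => ?_
            rw [hprodj j, TensorProduct.sum_tmul, map_sum]
            refine Finset.sum_congr rfl fun l _ => ?_
            rw [TensorProduct.sum_tmul, map_sum]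
            refine Finset.sum_congr rfl fun i _ => ?_
            rfl
        _ = ∑ j ∈ rg.index, ∑ l ∈ (rg1 j).index,
              (rg1 j).left l * (ad (k := k) Λ x * (S' ((rg1 j).right l) * rg.right j)) := by
            refine Finset.sum_congr rfl fun j _ => Finset.sum_congr rfl fun l _ => ?_
            calc ∑ i ∈ rΛ.index,
                (((rg1 j).left l * rΛ.left i) *
                  (x * S' ((rg1 j).right l * rΛ.right i))) * rg.right j
                = ∑ i ∈ rΛ.index, (rg1 j).left l * ((rΛ.left i * (x * S' (rΛ.right i))) *
                    (S' ((rg1 j).right l) * rg.right j)) := by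
                  refine Finset.sum_congr rfl fun i _ => ?_
                  rw [antipode_mul (k := k)]
                  simp only [mul_assoc]
              _ = (rg1 j).left l * ((∑ i ∈ rΛ.index, rΛ.left i * (x * S' (rΛ.right i))) *
                    (S' ((rg1 j).right l) * rg.right j)) := by
                  rw [← Finset.mul_sum, ← Finset.sum_mul]
              _ = (rg1 j).left l *
                    (ad (k := k) Λ x * (S' ((rg1 j).right l) * rg.right j)) := by
                  rw [← ad_eq Λ x rΛ]
    have e5 : (∑ j ∈ rg.index, ∑ l ∈ (rg1 j).index,
          (rg1 j).left l * (ad (k := k) Λ x * (S' ((rg1 j).right l) * rg.right j)))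
        = g * ad (k := k) Λ x := by
      have key := Coalgebra.sum_tmul_tmul_eq (R := k) rg rg1 rg2
      have h := congrArg (lift3 (φC (k := k) (ad (k := k) Λ x))) key
      simp only [map_sum, lift3_tmul, φC_apply] at h
      rw [h]
      calc ∑ j ∈ rg.index, ∑ m ∈ (rg2 j).index,
            rg.left j * (ad (k := k) Λ x * (S' ((rg2 j).left m) * (rg2 j).right m))
          = ∑ j ∈ rg.index, Coalgebra.counit (R := k) (rg.right j) •
              (rg.left j * ad (k := k) Λ x) := by
            refine Finset.sum_congr rfl fun j _ => ?_
            rw [← Finset.mul_sum, ← Finset.mul_sum,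
              HopfAlgebra.sum_antipode_mul_eq_smul (rg2 j), mul_smul_comm, mul_smul_comm,
              mul_one]
        _ = g * ad (k := k) Λ x := by
            have hcol := collapse_left (k := k) rg (LinearMap.mulRight k (ad (k := k) Λ x))
            simp only [LinearMap.mulRight_apply] at hcol
            exact hcol
    exact e5.symm.trans (e3.symm.trans e2)
  · intro z x hz
    refine ⟨z * x, ?_⟩
    have r := ℛ k Λ
    rw [ad_eq (k := k) Λ x r, ad_eq (k := k) Λ (z * x) r, Finset.mul_sum]
    refine Finset.sum_congr rfl fun i _ => ?_
    rw [← mul_assoc, ← hz (r.left i), mul_assoc, ← mul_assoc z x]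

end main

/-- if `H` is a finite-dimensional Hopf algebra and `Λ` a left integral
(`h Λ = ε(h) Λ` for all `h`), then every `ad Λ h = Σ Λ₁ h S(Λ₂)` is central in `H`,
and the subspace `ad Λ (H)` (the Higman ideal) is an ideal of the center: the product
of a central element with an element of `ad Λ (H)` again lies in `ad Λ (H)`. -/
theorem stmt_3 {k H : Type*} [Field k] [Ring H] [HopfAlgebra k H]
    [FiniteDimensional k H]
    (Λ : H) (hΛ : ∀ h : H, h * Λ = Coalgebra.counit (R := k) h • Λ) :
    (∀ (x g : H), g * ad (k := k) Λ x = ad (k := k) Λ x * g) ∧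
    (∀ (z x : H), (∀ g : H, g * z = z * g) →
      ∃ y : H, z * ad (k := k) Λ x = ad (k := k) Λ y) := by
  exact stmt_3' Λ hΛ
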